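/- Gentle sequential measurement step: for density matrices ρ, σ ∈ ℂ^{d×d} and an orthogonal projector A with tr(σA) > 0, the infidelity satisfies 1 − F(ρ, σ|A) ≤ (1 − F(ρ,σ)) + tr(ρ(Id−A)). -/

import Mathlib

open Matrix ComplexOrder

/-- The positive semidefinite square root of a positive semidefinite matrix
(removed from Mathlib; restored with its December 2024 definition). -/
noncomputable def Matrix.PosSemidef.sqrt {n : Type*} [Fintype n] [DecidableEq n]
    {𝕜 : Type*} [RCLike 𝕜] {A : Matrix n n 𝕜} (hA : A.PosSemidef) : Matrix n n 𝕜 :=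
  hA.1.eigenvectorUnitary.1 * diagonal ((↑) ∘ (√·) ∘ hA.1.eigenvalues) *
  (star hA.1.eigenvectorUnitary : Matrix n n 𝕜)

/-- The Schatten 1-norm (trace norm): ‖M‖₁ = tr √(MᴴM). -/
noncomputable def traceNorm {n m : Type*} [Fintype n] [Fintype m] [DecidableEq m]
    (M : Matrix n m ℂ) : ℝ :=
  ((Matrix.posSemidef_conjTranspose_mul_self M).sqrt.trace).re

section SqrtAux

open scoped MatrixOrder

variable {n : Type*} [Fintype n] [DecidableEq n] {𝕜 : Type*} [RCLike 𝕜]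

lemma Matrix.PosSemidef.sqrt_eq_cfcSqrt {A : Matrix n n 𝕜} (hA : A.PosSemidef) :
    hA.sqrt = CFC.sqrt A := by
  rw [CFC.sqrt_eq_cfc, cfc_nnreal_eq_real _ A hA.nonneg, hA.1.cfc_eq]
  simp only [IsHermitian.cfc, Unitary.conjStarAlgAut_apply, Matrix.PosSemidef.sqrt]
  congr 3
  funext i
  simp [Real.coe_sqrt, Real.coe_toNNReal', max_eq_left (hA.eigenvalues_nonneg i)]

lemma Matrix.PosSemidef.posSemidef_sqrt {A : Matrix n n 𝕜} (hA : A.PosSemidef) :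
    hA.sqrt.PosSemidef := by
  rw [hA.sqrt_eq_cfcSqrt]; exact (CFC.sqrt_nonneg A).posSemidef

lemma Matrix.PosSemidef.sqrt_mul_self {A : Matrix n n 𝕜} (hA : A.PosSemidef) :
    hA.sqrt * hA.sqrt = A := by
  rw [hA.sqrt_eq_cfcSqrt]; exact CFC.sqrt_mul_sqrt_self A hA.nonneg

lemma Matrix.PosSemidef.sq_sqrt {A : Matrix n n 𝕜} (hA : A.PosSemidef) :
    hA.sqrt ^ 2 = A := by
  rw [sq, hA.sqrt_mul_self]

lemma Matrix.PosSemidef.eq_sqrt_of_sq_eq {A : Matrix n n 𝕜} (hA : A.PosSemidef)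
    {B : Matrix n n 𝕜} (hB : B.PosSemidef) (hAB : A ^ 2 = B) : A = hB.sqrt := by
  rw [hB.sqrt_eq_cfcSqrt]
  exact (CFC.sqrt_unique (by rw [← sq, hAB]) hA.nonneg).symm

end SqrtAux

section GentleAux

variable {d : ℕ}

private lemma star_mul_self_complex (z : ℂ) : star z * z = ((‖z‖ ^ 2 : ℝ) : ℂ) := by
  rw [Complex.star_def, mul_comm, Complex.mul_conj, Complex.normSq_eq_norm_sq]

private lemma trace_conjTranspose_mul_self_eq (X : Matrix (Fin d) (Fin d) ℂ) :
    (Xᴴ * X).trace = ((∑ p : Fin d × Fin d, ‖X p.1 p.2‖ ^ 2 : ℝ) : ℂ) := by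
  simp only [Matrix.trace, Matrix.diag, Matrix.mul_apply, Matrix.conjTranspose_apply,
    star_mul_self_complex]
  push_cast
  rw [Fintype.sum_prod_type, Finset.sum_comm]


private lemma re_trace_ctms_nonneg (X : Matrix (Fin d) (Fin d) ℂ) :
    0 ≤ ((Xᴴ * X).trace).re := by
  rw [trace_conjTranspose_mul_self_eq, Complex.ofReal_re]
  positivity

private lemma trace_unitary_conj {M U : Matrix (Fin d) (Fin d) ℂ} (hUHU : Uᴴ * U = 1) :
    (U * M * Uᴴ).trace = M.trace := by
  rw [Matrix.trace_mul_cycle, hUHU, Matrix.one_mul]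

private lemma matrix_cauchy_schwarz (X Y : Matrix (Fin d) (Fin d) ℂ) :
    ‖(Xᴴ * Y).trace‖ ≤
      Real.sqrt (((Xᴴ * X).trace).re) * Real.sqrt (((Yᴴ * Y).trace).re) := by
  classical
  set v : EuclideanSpace ℂ (Fin d × Fin d) := WithLp.toLp 2 (fun p : Fin d × Fin d => X p.1 p.2) with hv
  set w : EuclideanSpace ℂ (Fin d × Fin d) := WithLp.toLp 2 (fun p : Fin d × Fin d => Y p.1 p.2) with hw
  have hinner : (Xᴴ * Y).trace = inner ℂ v w := by
    simp only [PiLp.inner_apply, RCLike.inner_apply, Matrix.trace, Matrix.diag,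
      Matrix.mul_apply, Matrix.conjTranspose_apply, hv, hw]
    rw [Fintype.sum_prod_type, Finset.sum_comm]
    simp [RCLike.star_def, mul_comm]
  have hnv : ‖v‖ = Real.sqrt (((Xᴴ * X).trace).re) := by
    rw [EuclideanSpace.norm_eq, trace_conjTranspose_mul_self_eq, Complex.ofReal_re]
  have hnw : ‖w‖ = Real.sqrt (((Yᴴ * Y).trace).re) := by
    rw [EuclideanSpace.norm_eq, trace_conjTranspose_mul_self_eq, Complex.ofReal_re]
  calc ‖(Xᴴ * Y).trace‖ = ‖(inner ℂ v w : ℂ)‖ := by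
        rw [hinner]
    _ ≤ ‖v‖ * ‖w‖ := norm_inner_le_norm v w
    _ = _ := by rw [hnv, hnw]

private lemma psd_trace_eq {P : Matrix (Fin d) (Fin d) ℂ} (hP : P.PosSemidef) :
    P.trace = (((P.trace).re : ℝ) : ℂ) := by
  have h : P = hP.sqrtᴴ * hP.sqrt := by
    rw [hP.posSemidef_sqrt.isHermitian.eq, hP.sqrt_mul_self]
  rw [h, trace_conjTranspose_mul_self_eq, Complex.ofReal_re]

private lemma psd_trace_re_nonneg {P : Matrix (Fin d) (Fin d) ℂ} (hP : P.PosSemidef) :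
    0 ≤ (P.trace).re := by
  have h : P = hP.sqrtᴴ * hP.sqrt := by
    rw [hP.posSemidef_sqrt.isHermitian.eq, hP.sqrt_mul_self]
  rw [h, trace_conjTranspose_mul_self_eq, Complex.ofReal_re]
  positivity

private lemma traceNorm_of_posSemidef {P : Matrix (Fin d) (Fin d) ℂ} (hP : P.PosSemidef) :
    traceNorm P = (P.trace).re := by
  have h : P = (Matrix.posSemidef_conjTranspose_mul_self P).sqrt :=
    hP.eq_sqrt_of_sq_eq _ (by rw [pow_two, hP.isHermitian.eq])
  rw [traceNorm, ← h]

private lemma traceNorm_nonneg' (M : Matrix (Fin d) (Fin d) ℂ) : 0 ≤ traceNorm M :=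
  psd_trace_re_nonneg (Matrix.posSemidef_conjTranspose_mul_self M).posSemidef_sqrt

private lemma traceNorm_mul_unitary (M : Matrix (Fin d) (Fin d) ℂ)
    {U : Matrix (Fin d) (Fin d) ℂ}
    (hU : U ∈ Matrix.unitaryGroup (Fin d) ℂ) : traceNorm (M * U) = traceNorm M := by
  have hUU : U * Uᴴ = 1 := by
    have := (Matrix.mem_unitaryGroup_iff).mp hU
    rwa [Matrix.star_eq_conjTranspose] at this
  have hN := Matrix.posSemidef_conjTranspose_mul_self M
  set P := hN.sqrt with hPdef
  have hP : P.PosSemidef := hN.posSemidef_sqrt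
  have hpsd : (Uᴴ * P * U).PosSemidef := hP.conjTranspose_mul_mul_same U
  have key : Uᴴ * P * U = (Matrix.posSemidef_conjTranspose_mul_self (M * U)).sqrt := by
    apply hpsd.eq_sqrt_of_sq_eq
    have hPP : P * P = Mᴴ * M := hN.sqrt_mul_self
    calc (Uᴴ * P * U) ^ 2 = Uᴴ * P * (U * Uᴴ) * P * U := by
          rw [pow_two]; noncomm_ring
      _ = Uᴴ * (P * P) * U := by rw [hUU]; noncomm_ring
      _ = (M * U)ᴴ * (M * U) := by rw [hPP, Matrix.conjTranspose_mul]; noncomm_ring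
  rw [traceNorm, ← key, traceNorm]
  rw [Matrix.trace_mul_cycle, hUU, Matrix.one_mul]

private lemma polar_of_isUnit {M : Matrix (Fin d) (Fin d) ℂ} (h : IsUnit M.det) :
    ∃ U ∈ Matrix.unitaryGroup (Fin d) ℂ,
      M = (Matrix.posSemidef_self_mul_conjTranspose M).sqrt * U := by
  have hN := Matrix.posSemidef_self_mul_conjTranspose M
  set P := hN.sqrt with hPdef
  have hP : P.PosSemidef := hN.posSemidef_sqrt
  have hPP : P * P = M * Mᴴ := hN.sqrt_mul_self
  have hdetM' : IsUnit Mᴴ.det := by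
    rw [Matrix.det_conjTranspose]
    exact h.star
  have hdetP : IsUnit P.det := by
    have h2 : P.det * P.det = M.det * Mᴴ.det := by
      rw [← Matrix.det_mul, hPP, Matrix.det_mul]
    have : P.det * P.det ≠ 0 := by
      rw [h2]; exact mul_ne_zero (h.ne_zero) (hdetM'.ne_zero)
    exact isUnit_iff_ne_zero.mpr (fun hz => this (by rw [hz, mul_zero]))
  have hPinv : P * P⁻¹ = 1 := Matrix.mul_nonsing_inv P hdetP
  refine ⟨P⁻¹ * M, ?_, ?_⟩
  · rw [Matrix.mem_unitaryGroup_iff', Matrix.star_eq_conjTranspose, Matrix.conjTranspose_mul,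
      Matrix.conjTranspose_nonsing_inv, hP.isHermitian.eq]
    have hinv2 : P⁻¹ * P⁻¹ = Mᴴ⁻¹ * M⁻¹ := by
      rw [← Matrix.mul_inv_rev, hPP, Matrix.mul_inv_rev]
    calc Mᴴ * P⁻¹ * (P⁻¹ * M) = Mᴴ * (P⁻¹ * P⁻¹) * M := by noncomm_ring
      _ = Mᴴ * (Mᴴ⁻¹ * M⁻¹) * M := by rw [hinv2]
      _ = (Mᴴ * Mᴴ⁻¹) * (M⁻¹ * M) := by noncomm_ring
      _ = 1 := by rw [Matrix.mul_nonsing_inv _ hdetM', Matrix.nonsing_inv_mul _ h, one_mul]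
  · rw [← Matrix.mul_assoc, hPinv, Matrix.one_mul]

private lemma isCompact_unitary :
    IsCompact {U : Matrix (Fin d) (Fin d) ℂ | U ∈ Matrix.unitaryGroup (Fin d) ℂ} := by
  classical
  have hK : IsCompact
      {M : Matrix (Fin d) (Fin d) ℂ | ∀ i j, M i j ∈ Metric.closedBall (0:ℂ) 1} := by
    have : {M : Matrix (Fin d) (Fin d) ℂ | ∀ i j, M i j ∈ Metric.closedBall (0:ℂ) 1} =
        Set.univ.pi fun _ : Fin d => Set.univ.pi fun _ : Fin d => Metric.closedBall (0:ℂ) 1 := by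
      ext M
      exact ⟨fun h i _ j _ => h i j, fun h i j => h i trivial j trivial⟩
    rw [this]
    exact isCompact_univ_pi fun _ => isCompact_univ_pi fun _ => isCompact_closedBall _ _
  apply hK.of_isClosed_subset
  · have hc : Continuous fun U : Matrix (Fin d) (Fin d) ℂ => (star U * U, U * star U) := by
      refine Continuous.prodMk ?_ ?_
      · exact (continuous_id.matrix_conjTranspose.matrix_mul continuous_id)
      · exact (continuous_id.matrix_mul continuous_id.matrix_conjTranspose)
    have : {U : Matrix (Fin d) (Fin d) ℂ | U ∈ Matrix.unitaryGroup (Fin d) ℂ} =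
        (fun U : Matrix (Fin d) (Fin d) ℂ => (star U * U, U * star U)) ⁻¹'
          {((1 : Matrix (Fin d) (Fin d) ℂ), (1 : Matrix (Fin d) (Fin d) ℂ))} := by
      ext U
      simp only [Set.mem_setOf_eq, Set.mem_preimage, Set.mem_singleton_iff, Prod.mk.injEq]
      exact Unitary.mem_iff
    rw [this]
    exact IsClosed.preimage hc isClosed_singleton
  · intro U hU i j
    have h1 : (star U * U) j j = 1 := by
      rw [(Matrix.mem_unitaryGroup_iff').mp hU]; simp
    have hsum : ∑ k, star (U k j) * U k j = 1 := by
      simpa [Matrix.mul_apply, Matrix.star_eq_conjTranspose, Matrix.conjTranspose_apply] using h1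
    have hterm : ‖U i j‖ ^ 2 ≤ 1 := by
      have hle : (‖U i j‖ ^ 2 : ℝ) ≤ ∑ k, ‖U k j‖ ^ 2 := by
        refine Finset.single_le_sum (f := fun k => (‖U k j‖ ^ 2 : ℝ)) (fun k _ => by positivity)
          (Finset.mem_univ i)
      have : ((∑ k, ‖U k j‖ ^ 2 : ℝ) : ℂ) = 1 := by
        push_cast
        rw [← hsum]
        congr 1; ext k
        rw [Complex.star_def, mul_comm, Complex.mul_conj, Complex.normSq_eq_norm_sq]
        push_cast; ring
      have h2 : (∑ k, ‖U k j‖ ^ 2 : ℝ) = 1 := by exact_mod_cast this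
      linarith [hle, h2.le]
    simp only [Metric.mem_closedBall, dist_zero_right]
    nlinarith [norm_nonneg (U i j)]

private lemma posSemidef_of_tendsto (f : ℕ → Matrix (Fin d) (Fin d) ℂ)
    (M : Matrix (Fin d) (Fin d) ℂ)
    (hf : ∀ k, (f k).PosSemidef) (hlim : Filter.Tendsto f Filter.atTop (nhds M)) :
    M.PosSemidef := by
  refine Matrix.PosSemidef.of_dotProduct_mulVec_nonneg ?_ ?_
  · have h1 : Filter.Tendsto (fun k => (f k)ᴴ) Filter.atTop (nhds Mᴴ) :=
      ((continuous_id.matrix_conjTranspose).tendsto M).comp hlim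
    have h2 : (fun k => (f k)ᴴ) = f := funext fun k => (hf k).1.eq
    rw [h2] at h1
    exact tendsto_nhds_unique h1 hlim
  · intro x
    have hc : Continuous fun N : Matrix (Fin d) (Fin d) ℂ => star x ⬝ᵥ (N *ᵥ x) :=
      (continuous_const.dotProduct (continuous_id.matrix_mulVec continuous_const))
    have h1 : Filter.Tendsto (fun k => star x ⬝ᵥ ((f k) *ᵥ x)) Filter.atTop
        (nhds (star x ⬝ᵥ (M *ᵥ x))) := (hc.tendsto M).comp hlim
    exact ge_of_tendsto' h1 fun k => (hf k).dotProduct_mulVec_nonneg x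

set_option maxHeartbeats 1000000 in
private lemma polar_decomposition (M : Matrix (Fin d) (Fin d) ℂ) :
    ∃ U ∈ Matrix.unitaryGroup (Fin d) ℂ,
      M = (Matrix.posSemidef_self_mul_conjTranspose M).sqrt * U := by
  classical
  have hSfin : {e : ℝ | ¬ IsUnit (M + ((e : ℝ) : ℂ) • 1)}.Finite := by
    have hsub : {e : ℝ | ¬ IsUnit (M + ((e : ℝ) : ℂ) • 1)} ⊆
        (fun e : ℝ => ((-e : ℝ) : ℂ)) ⁻¹' (spectrum ℂ M) := by
      intro e he
      simp only [Set.mem_preimage, spectrum.mem_iff]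
      intro hu
      apply he
      have : (algebraMap ℂ (Matrix (Fin d) (Fin d) ℂ)) ((-e : ℝ) : ℂ) - M
          = -(M + ((e : ℝ) : ℂ) • 1) := by
        rw [Algebra.algebraMap_eq_smul_one]
        push_cast
        module
      rw [this] at hu
      exact (IsUnit.neg_iff _).mp hu
    exact ((Matrix.finite_spectrum M).preimage
      (fun a _ b _ hab => by simpa using hab)).subset hsub
  have hchoice : ∀ k : ℕ, ∃ e : ℝ, e ∈ Set.Ioo (0:ℝ) (1/(k+1)) ∧
      IsUnit (M + ((e : ℝ) : ℂ) • 1) := by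
    intro k
    have hIoo : (Set.Ioo (0:ℝ) (1/(k+1))).Infinite :=
      Set.Ioo_infinite (by positivity)
    obtain ⟨e, he⟩ := (hIoo.diff hSfin).nonempty
    exact ⟨e, he.1, not_not.mp he.2⟩
  choose eps heps hunit using hchoice
  have heps0 : Filter.Tendsto eps Filter.atTop (nhds 0) := by
    refine tendsto_of_tendsto_of_tendsto_of_le_of_le tendsto_const_nhds
      tendsto_one_div_add_atTop_nhds_zero_nat (fun k => (heps k).1.le) (fun k => (heps k).2.le)
  set N : ℕ → Matrix (Fin d) (Fin d) ℂ := fun k => M + ((eps k : ℝ) : ℂ) • 1 with hNdef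
  have hNlim : Filter.Tendsto N Filter.atTop (nhds M) := by
    have hc : Continuous fun e : ℝ => M + ((e : ℝ) : ℂ) • (1 : Matrix (Fin d) (Fin d) ℂ) :=
      continuous_const.add (Complex.continuous_ofReal.smul continuous_const)
    have := (hc.tendsto 0).comp heps0
    rw [Complex.ofReal_zero, zero_smul, add_zero] at this
    exact this
  have hNdet : ∀ k, IsUnit (N k).det := fun k =>
    (Matrix.isUnit_iff_isUnit_det (N k)).mp (hunit k)
  choose U hUmem hUeq using fun k => polar_of_isUnit (hNdet k)
  haveI : FirstCountableTopology (Matrix (Fin d) (Fin d) ℂ) :=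
    inferInstanceAs (FirstCountableTopology (Fin d → Fin d → ℂ))
  obtain ⟨V, hVmem, φ, hφ, hUlim⟩ := isCompact_unitary.tendsto_subseq hUmem
  have hP : (M * Vᴴ).PosSemidef := by
    apply posSemidef_of_tendsto (fun k => N (φ k) * (U (φ k))ᴴ)
    · intro k
      have h1 : U (φ k) * (U (φ k))ᴴ = 1 := by
        have := (Matrix.mem_unitaryGroup_iff).mp (hUmem (φ k))
        rwa [Matrix.star_eq_conjTranspose] at this
      have h2 : N (φ k) * (U (φ k))ᴴ =
          (Matrix.posSemidef_self_mul_conjTranspose (N (φ k))).sqrt := by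
        conv_lhs => rw [hUeq (φ k), Matrix.mul_assoc, h1, Matrix.mul_one]
      exact h2 ▸ (Matrix.posSemidef_self_mul_conjTranspose (N (φ k))).posSemidef_sqrt
    · have hcont : Continuous fun p : Matrix (Fin d) (Fin d) ℂ × Matrix (Fin d) (Fin d) ℂ =>
          p.1 * p.2ᴴ :=
        continuous_fst.matrix_mul continuous_snd.matrix_conjTranspose
      have h2 : Filter.Tendsto (fun k => (N (φ k), U (φ k))) Filter.atTop (nhds (M, V)) :=
        (hNlim.comp (hφ.tendsto_atTop)).prodMk_nhds hUlim
      have h3 := (hcont.tendsto (M, V)).comp h2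
      exact h3
  have hVV : Vᴴ * V = 1 := by
    have := (Matrix.mem_unitaryGroup_iff').mp hVmem
    rwa [Matrix.star_eq_conjTranspose] at this
  have hMP : (M * Vᴴ) * V = M := by rw [Matrix.mul_assoc, hVV, Matrix.mul_one]
  have hsq : (M * Vᴴ) ^ 2 = M * Mᴴ := by
    have hherm : (M * Vᴴ)ᴴ = M * Vᴴ := hP.isHermitian.eq
    calc (M * Vᴴ) ^ 2 = (M * Vᴴ) * (M * Vᴴ)ᴴ := by rw [pow_two, hherm]
      _ = M * (Vᴴ * V) * Mᴴ := by
          rw [Matrix.conjTranspose_mul, Matrix.conjTranspose_conjTranspose]; noncomm_ring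
      _ = M * Mᴴ := by rw [hVV, Matrix.mul_one]
  have hfin : M * Vᴴ = (Matrix.posSemidef_self_mul_conjTranspose M).sqrt :=
    hP.eq_sqrt_of_sq_eq _ hsq
  exact ⟨V, hVmem, by rw [← hfin, hMP]⟩

private lemma traceNorm_exists_unitary (M : Matrix (Fin d) (Fin d) ℂ) :
    ∃ U ∈ Matrix.unitaryGroup (Fin d) ℂ, (M * Uᴴ).PosSemidef ∧
      traceNorm M = ((M * Uᴴ).trace).re := by
  obtain ⟨U, hUmem, hUeq⟩ := polar_decomposition M
  have hUU : U * Uᴴ = 1 := by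
    have := (Matrix.mem_unitaryGroup_iff).mp hUmem
    rwa [Matrix.star_eq_conjTranspose] at this
  have hN := Matrix.posSemidef_self_mul_conjTranspose M
  have hMU : M * Uᴴ = hN.sqrt := by
    conv_lhs => rw [hUeq, Matrix.mul_assoc, hUU, Matrix.mul_one]
  refine ⟨U, hUmem, hMU ▸ hN.posSemidef_sqrt, ?_⟩
  have h1 : traceNorm M = traceNorm hN.sqrt := by
    conv_lhs => rw [hUeq]
    exact traceNorm_mul_unitary _ hUmem
  rw [h1, hMU, traceNorm_of_posSemidef hN.posSemidef_sqrt]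

private lemma abs_trace_le_traceNorm (M : Matrix (Fin d) (Fin d) ℂ) :
    ‖M.trace‖ ≤ traceNorm M := by
  obtain ⟨U, hUmem, hPsd, hEq⟩ := traceNorm_exists_unitary M
  have hUU' : Uᴴ * U = 1 := by
    have := (Matrix.mem_unitaryGroup_iff').mp hUmem
    rwa [Matrix.star_eq_conjTranspose] at this
  set P := M * Uᴴ with hPdef
  have hM : M = P * U := by rw [hPdef, Matrix.mul_assoc, hUU', Matrix.mul_one]
  set Q := hPsd.sqrt with hQdef
  have hQH : Qᴴ = Q := hPsd.posSemidef_sqrt.isHermitian.eq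
  have hQQ : Q * Q = P := hPsd.sqrt_mul_self
  have hMQ : M = Q * (Q * U) := by rw [hM, ← hQQ, Matrix.mul_assoc]
  have htr : M.trace = (Qᴴ * (Q * U)).trace := by rw [hQH, ← hMQ]
  have hcs := matrix_cauchy_schwarz Q (Q * U)
  rw [← htr] at hcs
  have h1 : (Qᴴ * Q).trace = P.trace := by rw [hQH, hQQ]
  have h2 : ((Q * U)ᴴ * (Q * U)).trace = P.trace := by
    rw [Matrix.conjTranspose_mul, hQH]
    calc (Uᴴ * Q * (Q * U)).trace = (Uᴴ * ((Q * Q) * U)).trace := by noncomm_ring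
      _ = ((Q * Q) * (U * Uᴴ)).trace := by
          rw [Matrix.trace_mul_comm, Matrix.mul_assoc]
      _ = P.trace := by
          have hUU : U * Uᴴ = 1 := by
            have := (Matrix.mem_unitaryGroup_iff).mp hUmem
            rwa [Matrix.star_eq_conjTranspose] at this
          rw [hUU, Matrix.mul_one, hQQ]
  rw [h1, h2, Real.mul_self_sqrt (psd_trace_re_nonneg hPsd)] at hcs
  rw [hEq]
  exact hcs

private lemma posSemidef_ofReal_smul {r : ℝ} (hr : 0 ≤ r) {Q : Matrix (Fin d) (Fin d) ℂ}
    (hQ : Q.PosSemidef) : (((r : ℝ) : ℂ) • Q).PosSemidef := by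
  refine Matrix.PosSemidef.of_dotProduct_mulVec_nonneg ?_ ?_
  · rw [Matrix.IsHermitian, Matrix.conjTranspose_smul, Complex.star_def, Complex.conj_ofReal,
      hQ.isHermitian.eq]
  · intro x
    rw [Matrix.smul_mulVec, dotProduct_smul, smul_eq_mul]
    have h0 : (0:ℂ) ≤ ((r:ℝ):ℂ) := by
      rw [Complex.zero_le_real]; exact hr
    exact mul_nonneg h0 (hQ.dotProduct_mulVec_nonneg x)

private lemma traceNorm_ofReal_smul {r : ℝ} (hr : 0 ≤ r) (M : Matrix (Fin d) (Fin d) ℂ) :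
    traceNorm (((r : ℝ) : ℂ) • M) = r * traceNorm M := by
  have hN := Matrix.posSemidef_conjTranspose_mul_self M
  have hsm : (((r : ℝ) : ℂ) • M)ᴴ * (((r : ℝ) : ℂ) • M) = (((r^2 : ℝ) : ℂ)) • (Mᴴ * M) := by
    rw [Matrix.conjTranspose_smul, Complex.star_def, Complex.conj_ofReal, smul_mul_smul_comm]
    push_cast
    rw [pow_two]
  have hpsd : ((((r : ℝ) : ℂ)) • hN.sqrt).PosSemidef :=
    posSemidef_ofReal_smul hr hN.posSemidef_sqrt
  have key : (((r : ℝ) : ℂ)) • hN.sqrt =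
      (Matrix.posSemidef_conjTranspose_mul_self (((r : ℝ) : ℂ) • M)).sqrt := by
    apply hpsd.eq_sqrt_of_sq_eq
    rw [smul_pow, hN.sq_sqrt, hsm]
    congr 1
    push_cast
    rw [pow_two]
  rw [traceNorm, ← key, Matrix.trace_smul, traceNorm]
  simp [Complex.smul_re]

end GentleAux

set_option maxHeartbeats 1600000 in
/-- Gentle sequential measurement step: 1 − F(ρ,σ|A) ≤ (1 − F(ρ,σ)) + tr(ρ(1−A)). -/
theorem infidelity_cond_le {d : ℕ} (ρ σ A : Matrix (Fin d) (Fin d) ℂ)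
    (hρ : ρ.PosSemidef) (hρ1 : ρ.trace = 1)
    (hσ : σ.PosSemidef) (hσ1 : σ.trace = 1)
    (hA : A.IsHermitian) (hA2 : A * A = A)
    (hpos : 0 < ((σ * A).trace).re)
    (hcond : (((σ * A).trace)⁻¹ • (A * σ * A)).PosSemidef) :
    1 - traceNorm (hρ.sqrt * hcond.sqrt) ^ 2 ≤
      (1 - traceNorm (hρ.sqrt * hσ.sqrt) ^ 2) + ((ρ * (1 - A)).trace).re := by
  classical
  set R := hρ.sqrt with hRdef
  set S := hσ.sqrt with hSdef
  have hRH : Rᴴ = R := hρ.posSemidef_sqrt.isHermitian.eq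
  have hSH : Sᴴ = S := hσ.posSemidef_sqrt.isHermitian.eq
  have hRR : R * R = ρ := hρ.sqrt_mul_self
  have hSS : S * S = σ := hσ.sqrt_mul_self
  have hAH : Aᴴ = A := hA.eq
  have hApsd : A.PosSemidef := by
    have h0 : A = Aᴴ * A := by rw [hAH, hA2]
    exact h0 ▸ Matrix.posSemidef_conjTranspose_mul_self A
  have hBH : (1 - A)ᴴ = 1 - A := by
    rw [Matrix.conjTranspose_sub, Matrix.conjTranspose_one, hAH]
  have hBB : (1 - A) * (1 - A) = 1 - A := by
    have h0 : (1 - A) * (1 - A) = 1 - A - A + A * A := by noncomm_ring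
    rw [h0, hA2]
    abel
  have hAσA : (A * σ * A).PosSemidef := by
    have := hσ.mul_mul_conjTranspose_same A
    rwa [hAH] at this
  set B := hAσA.sqrt with hBdef
  set t : ℝ := ((σ * A).trace).re with htdef
  set ε : ℝ := ((ρ * (1 - A)).trace).re with hεdef
  -- (T1) trace identity for ρ(1-A)
  have hT1 : (((1 - A) * R)ᴴ * ((1 - A) * R)).trace = (ρ * (1 - A)).trace := by
    rw [Matrix.conjTranspose_mul, hBH, hRH,
      show (R * (1 - A)) * ((1 - A) * R) = R * ((1 - A) * (1 - A)) * R from by noncomm_ring,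
      hBB, Matrix.trace_mul_cycle, hRR]
  have hε0 : 0 ≤ ε := by
    rw [hεdef, ← hT1]
    exact re_trace_ctms_nonneg _
  -- (T2) trace identity for σ(1-A)
  have hT2 : (((1 - A) * S)ᴴ * ((1 - A) * S)).trace = (σ * (1 - A)).trace := by
    rw [Matrix.conjTranspose_mul, hBH, hSH,
      show (S * (1 - A)) * ((1 - A) * S) = S * ((1 - A) * (1 - A)) * S from by noncomm_ring,
      hBB, Matrix.trace_mul_cycle, hSS]
  have hσ1A : (σ * (1 - A)).trace = 1 - (σ * A).trace := by
    rw [mul_sub, mul_one, Matrix.trace_sub, hσ1]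
  have hσ1Are : ((σ * (1 - A)).trace).re = 1 - t := by
    rw [hσ1A, Complex.sub_re, Complex.one_re, htdef]
  have ht1 : t ≤ 1 := by
    have h0 : 0 ≤ ((σ * (1 - A)).trace).re := by
      rw [← hT2]; exact re_trace_ctms_nonneg _
    rw [hσ1Are] at h0; linarith
  -- (T3) trace of σA is real
  have hSAS : (S * A * S).PosSemidef := by
    have := hApsd.mul_mul_conjTranspose_same S
    rwa [hSH] at this
  have hσA : (σ * A).trace = ((t : ℝ) : ℂ) := by
    have h3 : (σ * A).trace = (S * A * S).trace := by
      rw [← hSS]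
      exact (Matrix.trace_mul_cycle S A S).symm
    rw [h3, psd_trace_eq hSAS]
    norm_cast
    rw [htdef, h3]
  -- (T4) the conditioned square root
  set r : ℝ := (Real.sqrt t)⁻¹ with hrdef
  have hr0 : 0 ≤ r := by positivity
  have hrsq : r ^ 2 = t⁻¹ := by
    rw [hrdef, inv_pow, Real.sq_sqrt hpos.le]
  have hcsqrt : hcond.sqrt = ((r : ℝ) : ℂ) • B := by
    symm
    apply (posSemidef_ofReal_smul hr0 hAσA.posSemidef_sqrt).eq_sqrt_of_sq_eq
    rw [smul_pow, hAσA.sq_sqrt, hσA]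
    congr 1
    rw [← Complex.ofReal_pow, hrsq, Complex.ofReal_inv]
  set a : ℝ := traceNorm (R * B) with hadef
  have ha0 : 0 ≤ a := traceNorm_nonneg' _
  have hTleft : traceNorm (R * hcond.sqrt) = r * a := by
    rw [hcsqrt, Matrix.mul_smul, traceNorm_ofReal_smul hr0]
  -- (T5) fidelity decomposition
  set F₁ : ℝ := traceNorm (R * S) with hF₁def
  have hF₁0 : 0 ≤ F₁ := traceNorm_nonneg' _
  obtain ⟨U, hUmem, hPpsd, hFeq⟩ := traceNorm_exists_unitary (R * S)
  have hUH : Uᴴ ∈ Matrix.unitaryGroup (Fin d) ℂ := by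
    rw [← Matrix.star_eq_conjTranspose]
    exact Unitary.star_mem hUmem
  have hUU : U * Uᴴ = 1 := by
    have := (Matrix.mem_unitaryGroup_iff).mp hUmem
    rwa [Matrix.star_eq_conjTranspose] at this
  have hUHU : Uᴴ * U = 1 := by
    have := (Matrix.mem_unitaryGroup_iff').mp hUmem
    rwa [Matrix.star_eq_conjTranspose] at this
  have hsplit : (R * S) * Uᴴ = (R * A * S) * Uᴴ + (R * (1 - A) * S) * Uᴴ := by noncomm_ring
  have hFsum : F₁ = (((R * A * S) * Uᴴ).trace).re + (((R * (1 - A) * S) * Uᴴ).trace).re := by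
    rw [hF₁def, hFeq, hsplit, Matrix.trace_add, Complex.add_re]
  -- Term 1: bounded by a
  have hterm1 : (((R * A * S) * Uᴴ).trace).re ≤ a := by
    have h1 : (((R * A * S) * Uᴴ).trace).re ≤ ‖((R * A * S) * Uᴴ).trace‖ :=
      Complex.re_le_norm _
    have h2 : ‖((R * A * S) * Uᴴ).trace‖ ≤ traceNorm ((R * A * S) * Uᴴ) :=
      abs_trace_le_traceNorm _
    have h3 : traceNorm ((R * A * S) * Uᴴ) = traceNorm (R * A * S) :=
      traceNorm_mul_unitary _ hUH
    obtain ⟨W, hWmem, hWeq⟩ := polar_decomposition (A * S)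
    have hQB : (Matrix.posSemidef_self_mul_conjTranspose (A * S)).sqrt = B := by
      symm
      apply hAσA.posSemidef_sqrt.eq_sqrt_of_sq_eq
      rw [hAσA.sq_sqrt, Matrix.conjTranspose_mul, hSH, hAH, ← hSS]
      noncomm_ring
    rw [hQB] at hWeq
    have h4 : R * A * S = (R * B) * W := by
      rw [Matrix.mul_assoc, hWeq, Matrix.mul_assoc]
    have h5 : traceNorm (R * A * S) = a := by
      rw [h4, traceNorm_mul_unitary _ hWmem, hadef]
    linarith
  -- Term 2: Cauchy-Schwarz bound
  have hterm2 : (((R * (1 - A) * S) * Uᴴ).trace).re ≤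
      Real.sqrt ε * Real.sqrt (1 - t) := by
    set X := (1 - A) * R with hXdef
    set Y := (1 - A) * S * Uᴴ with hYdef
    have hXY : Xᴴ * Y = (R * (1 - A) * S) * Uᴴ := by
      rw [hXdef, hYdef, Matrix.conjTranspose_mul, hBH, hRH,
        show (R * (1 - A)) * ((1 - A) * S * Uᴴ) = R * ((1 - A) * (1 - A)) * (S * Uᴴ) from by
          noncomm_ring, hBB]
      all_goals noncomm_ring
    have hXX : ((Xᴴ * X).trace).re = ε := by
      rw [hXdef, hT1, hεdef]
    have hYY : ((Yᴴ * Y).trace).re = 1 - t := by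
      have h6 : Yᴴ * Y = (Uᴴ)ᴴ * (S * (1 - A) * S) * Uᴴ := by
        rw [hYdef, Matrix.conjTranspose_mul, Matrix.conjTranspose_mul, hBH, hSH,
          Matrix.conjTranspose_conjTranspose,
          show U * (S * (1 - A)) * ((1 - A) * S * Uᴴ) =
            U * (S * ((1 - A) * (1 - A)) * S) * Uᴴ from by noncomm_ring, hBB]
        all_goals noncomm_ring
      have h7 : (Yᴴ * Y).trace = (S * (1 - A) * S).trace := by
        rw [h6, Matrix.conjTranspose_conjTranspose, trace_unitary_conj hUHU]
      have h8 : (S * (1 - A) * S).trace = (σ * (1 - A)).trace := by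
        rw [Matrix.trace_mul_cycle, hSS]
      rw [h7, h8, hσ1Are]
    have hcs := matrix_cauchy_schwarz X Y
    rw [hXY, hXX, hYY] at hcs
    calc (((R * (1 - A) * S) * Uᴴ).trace).re
        ≤ ‖((R * (1 - A) * S) * Uᴴ).trace‖ := Complex.re_le_norm _
      _ ≤ Real.sqrt ε * Real.sqrt (1 - t) := hcs
  have hFbound : F₁ ≤ a + Real.sqrt ε * Real.sqrt (1 - t) := by
    rw [hFsum]; linarith
  -- numeric conclusion
  rw [hTleft]
  set s1 := Real.sqrt ε with hs1
  set s2 := Real.sqrt (1 - t) with hs2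
  set s3 := Real.sqrt t with hs3
  have hs1sq : s1 ^ 2 = ε := Real.sq_sqrt hε0
  have hs2sq : s2 ^ 2 = 1 - t := Real.sq_sqrt (by linarith)
  have hs3sq : s3 ^ 2 = t := Real.sq_sqrt hpos.le
  have hs30 : 0 < s3 := Real.sqrt_pos.mpr hpos
  have hs10 : 0 ≤ s1 := Real.sqrt_nonneg _
  have hs20 : 0 ≤ s2 := Real.sqrt_nonneg _
  have hra : (r * a) ^ 2 = a ^ 2 / t := by
    rw [mul_pow, hrsq]
    ring
  have hkey := two_mul_le_add_sq (a * s2 / s3) (s1 * s3)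
  have he1 : (a * s2 / s3) ^ 2 = a ^ 2 * (1 - t) / t := by
    rw [div_pow, mul_pow, hs2sq, hs3sq]
  have he2 : (s1 * s3) ^ 2 = ε * t := by
    rw [mul_pow, hs1sq, hs3sq]
  have he3 : 2 * (a * s2 / s3) * (s1 * s3) = 2 * a * (s1 * s2) := by
    field_simp
  rw [he1, he2, he3] at hkey
  have hF₁sq : F₁ ^ 2 ≤ (a + s1 * s2) ^ 2 := by
    apply pow_le_pow_left₀ hF₁0 hFbound
  have hexp : (a + s1 * s2) ^ 2 = a ^ 2 + 2 * a * (s1 * s2) + ε * (1 - t) := by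
    have hss : (s1 * s2) ^ 2 = ε * (1 - t) := by rw [mul_pow, hs1sq, hs2sq]
    rw [add_sq, hss]
  have hfield : a ^ 2 + a ^ 2 * (1 - t) / t = a ^ 2 / t := by
    field_simp
    ring
  have hsum : ε * (1 - t) + ε * t = ε := by ring
  have hfinal : F₁ ^ 2 ≤ a ^ 2 / t + ε := by
    rw [hexp] at hF₁sq
    linarith [hF₁sq, hkey, hfield, hsum]
  rw [hra]
  linarith
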